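/- Let σ and τ be two stability conditions on D^b(X) (X a smooth projective variety) with the same central charge, and suppose d(σ, τ) ≤ 1 for the generalized metric d(σ, τ) = sup over nonzero objects E of max(|φ⁻_σ(E) − φ⁻_τ(E)|, |φ⁺_σ(E) − φ⁺_τ(E)|). Then σ = τ. -/

import Mathlib

/-!
# Bridgeland stability conditions: basic framework

We formalize slicings, Harder–Narasimhan filtrations, pre-stability conditions and
(numerical) stability conditions on a pretriangulated category `D`, following
Bridgeland and the conventions of Fu–Li–Zhao, "Stability manifolds of varieties with
finite Albanese morphisms".
-/

open CategoryTheory CategoryTheory.Limits CategoryTheory.Pretriangulated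
open scoped TensorProduct ENNReal

noncomputable section

namespace BridgelandStability

universe w v u

variable (D : Type u) [Category.{v} D] [HasZeroObject D] [Preadditive D]
  [HasShift D ℤ] [∀ n : ℤ, (CategoryTheory.shiftFunctor D n).Additive] [Pretriangulated D]

/-- A Harder–Narasimhan filtration of an object `E` with respect to a collection of
full subcategories `P φ` (`φ ∈ ℝ`): a finite tower of distinguished triangles
`0 = E₀ → E₁ → ⋯ → E_m = E` whose cones (the HN factors) `Aᵢ` are nonzero objects of
`P φᵢ` with strictly decreasing phases `φ₁ > ⋯ > φ_m`. -/
structure HNFiltration (P : ℝ → Set D) (E : D) where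
  n : ℕ
  phase : Fin n → ℝ
  phase_strictAnti : StrictAnti phase
  obj : Fin (n + 1) → D
  obj_zero : IsZero (obj 0)
  obj_last : obj (Fin.last n) = E
  factor : Fin n → D
  factor_mem : ∀ i, factor i ∈ P (phase i)
  factor_nonzero : ∀ i, ¬ IsZero (factor i)
  factor_triangle : ∀ i : Fin n,
    ∃ (f : obj i.castSucc ⟶ obj i.succ) (g : obj i.succ ⟶ factor i)
      (h : factor i ⟶ (obj i.castSucc)⟦(1 : ℤ)⟧),
      Triangle.mk f g h ∈ (distTriang D)

/-- A slicing of the triangulated category `D` (Bridgeland): full additive subcategories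
`P φ` indexed by `φ ∈ ℝ` with `P (φ)[1] = P (φ + 1)`, no morphisms from higher to lower
phase, and Harder–Narasimhan filtrations for every object. -/
structure Slicing where
  P : ℝ → Set D
  iso_closed : ∀ (φ : ℝ) (E F : D), E ∈ P φ → Nonempty (E ≅ F) → F ∈ P φ
  zero_mem : ∀ (φ : ℝ) (E : D), IsZero E → E ∈ P φ
  shift_mem : ∀ (φ : ℝ) (E : D), E ∈ P φ ↔ (E⟦(1 : ℤ)⟧ ∈ P (φ + 1))
  hom_vanish : ∀ ⦃φ ψ : ℝ⦄, ψ < φ → ∀ ⦃E F : D⦄, E ∈ P φ → F ∈ P ψ →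
    ∀ f : E ⟶ F, f = 0
  hn_exists : ∀ E : D, Nonempty (HNFiltration D P E)

variable {D}

namespace Slicing

/-- A nonzero object of `P φ` is semistable of phase `φ`. -/
def IsSemistable (S : Slicing D) (φ : ℝ) (E : D) : Prop := E ∈ S.P φ ∧ ¬ IsZero E

/-- A stable object of phase `φ` is a simple object of the (abelian) category `P φ`:
it is semistable and admits no proper nontrivial subobject in `P φ`, where subobjects and
quotients in `P φ` are encoded by distinguished triangles `A → E → B → A[1]` with
`A, B ∈ P φ`. -/
def IsStable (S : Slicing D) (φ : ℝ) (E : D) : Prop :=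
  S.IsSemistable φ E ∧
    ∀ (A B : D) (f : A ⟶ E) (g : E ⟶ B) (h : B ⟶ A⟦(1 : ℤ)⟧),
      Triangle.mk f g h ∈ (distTriang D) → A ∈ S.P φ → B ∈ S.P φ → IsZero A ∨ IsZero B

/-- The set of phases of the (nonzero) Harder–Narasimhan factors of `E`. -/
def hnPhases (S : Slicing D) (E : D) : Set ℝ :=
  {φ : ℝ | ∃ (h : HNFiltration D S.P E) (i : Fin h.n), h.phase i = φ}

/-- `φ⁺(E)`: the largest HN phase of `E`. -/
def phasePlus (S : Slicing D) (E : D) : ℝ := sSup (S.hnPhases E)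

/-- `φ⁻(E)`: the smallest HN phase of `E`. -/
def phaseMinus (S : Slicing D) (E : D) : ℝ := sInf (S.hnPhases E)

/-- `E ∈ P(I)`: `E` admits a HN filtration all of whose phases lie in `I`. -/
def memSlice (S : Slicing D) (I : Set ℝ) (E : D) : Prop :=
  ∃ h : HNFiltration D S.P E, ∀ i, h.phase i ∈ I

/-- `A` is (isomorphic to) the Harder–Narasimhan factor `HN^a(E)` of `E` of phase `a`
(the zero object if no HN factor of `E` has phase `a`). -/
def IsHNFactorAt (S : Slicing D) (a : ℝ) (E A : D) : Prop :=
  ∃ h : HNFiltration D S.P E,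
    (∃ i, h.phase i = a ∧ Nonempty (h.factor i ≅ A)) ∨
      ((∀ i, h.phase i ≠ a) ∧ IsZero A)

/-- `Y` is (isomorphic to) the truncated Harder–Narasimhan factor `HN^{≤ c}(E)`:
there is a distinguished triangle `W → E → Y → W[1]` with `W ∈ P((c, +∞))` and
`Y ∈ P((-∞, c])`. -/
def IsHNTruncLE (S : Slicing D) (c : ℝ) (E Y : D) : Prop :=
  ∃ (W : D) (f : W ⟶ E) (g : E ⟶ Y) (h : Y ⟶ W⟦(1 : ℤ)⟧),
    Triangle.mk f g h ∈ (distTriang D) ∧ S.memSlice (Set.Ioi c) W ∧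
      S.memSlice (Set.Iic c) Y

/-- `A` is a subquotient of `H` inside the abelian category `P φ`:  there are
distinguished triangles `W → H → Q → W[1]` and `U → W → A → U[1]` with all objects in
`P φ`. -/
def IsSubquotientAt (S : Slicing D) (φ : ℝ) (A H : D) : Prop :=
  ∃ (W Q U : D) (f : W ⟶ H) (g : H ⟶ Q) (h : Q ⟶ W⟦(1 : ℤ)⟧)
    (f' : U ⟶ W) (g' : W ⟶ A) (h' : A ⟶ U⟦(1 : ℤ)⟧),
    Triangle.mk f g h ∈ (distTriang D) ∧ Triangle.mk f' g' h' ∈ (distTriang D) ∧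
      W ∈ S.P φ ∧ Q ∈ S.P φ ∧ U ∈ S.P φ ∧ A ∈ S.P φ

/-- `A` is a Jordan–Hölder factor of `E`: a stable subquotient (in `P φ`) of a
Harder–Narasimhan factor of `E` of some phase `φ`. -/
def IsJHFactorOf (S : Slicing D) (E A : D) : Prop :=
  ∃ (φ : ℝ) (H : D), S.IsHNFactorAt φ E H ∧ S.IsStable φ A ∧ S.IsSubquotientAt φ A H

end Slicing

variable (D)

/-- A Bridgeland pre-stability condition: a slicing together with a compatible central
charge `Z`, viewed as a function on objects that is additive on distinguished triangles
(equivalently, a group homomorphism `K(D) → ℂ`). -/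
structure PreStability where
  slicing : Slicing D
  Z : D → ℂ
  Z_zero : ∀ E : D, IsZero E → Z E = 0
  Z_additive : ∀ T : Triangle D, T ∈ (distTriang D) → Z T.obj₂ = Z T.obj₁ + Z T.obj₃
  Z_phase : ∀ (φ : ℝ) (E : D), E ∈ slicing.P φ → ¬ IsZero E →
    ∃ m : ℝ, 0 < m ∧ Z E = (m : ℂ) * Complex.exp ((Real.pi * φ : ℝ) * Complex.I)

/-- A Bridgeland stability condition: a pre-stability condition whose central charge
factors through a surjection `v : K(D) ↠ Λ` onto a finite-rank free abelian group and
which satisfies the support property: there is a quadratic form `Q` on `Λ ⊗ ℝ` which is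
negative definite on `ker Z` and nonnegative on classes of semistable objects. -/
structure StabilityCondition extends PreStability D where
  Λ : Type w
  [Λ_addCommGroup : AddCommGroup Λ]
  Λ_free : Module.Free ℤ Λ
  Λ_finite : Module.Finite ℤ Λ
  v : D → Λ
  v_zero : ∀ E : D, IsZero E → v E = 0
  v_additive : ∀ T : Triangle D, T ∈ (distTriang D) → v T.obj₂ = v T.obj₁ + v T.obj₃
  v_surjective : AddSubgroup.closure (Set.range v) = ⊤
  ZΛ : Λ →+ ℂ
  Z_factors : ∀ E : D, Z E = ZΛ (v E)
  support_property :
    ∃ (Q : QuadraticForm ℝ (ℝ ⊗[ℤ] Λ)) (ZR : (ℝ ⊗[ℤ] Λ) →ₗ[ℝ] ℂ),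
      (∀ a : Λ, ZR ((1 : ℝ) ⊗ₜ[ℤ] a) = ZΛ a) ∧
      (∀ x : ℝ ⊗[ℤ] Λ, ZR x = 0 → x ≠ 0 → Q x < 0) ∧
      (∀ (φ : ℝ) (E : D), E ∈ slicing.P φ → ¬ IsZero E → 0 ≤ Q ((1 : ℝ) ⊗ₜ[ℤ] v E))

variable {D}

/-- A stability condition is numerical (with respect to the Euler pairing `χ` of `D`) if
the map to the lattice `Λ` factors through the numerical Grothendieck group, i.e. through
the quotient of `K(D)` by the radical of `χ`. -/
def StabilityCondition.IsNumerical (σ : StabilityCondition.{w} D) (χ : D → D → ℤ) : Prop :=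
  ∀ E F : D, (∀ G : D, χ E G = χ F G) → (∀ G : D, χ G E = χ G F) → σ.v E = σ.v F

variable (D)

/-- A filtration of `E` by distinguished triangles whose factors satisfy `C`. -/
def HasFiltrationWithFactors (C : D → Prop) (E : D) : Prop :=
  ∃ (n : ℕ) (obj : Fin (n + 1) → D) (fac : Fin n → D),
    IsZero (obj 0) ∧ obj (Fin.last n) = E ∧ (∀ i, C (fac i)) ∧
    ∀ i : Fin n, ∃ (f : obj i.castSucc ⟶ obj i.succ) (g : obj i.succ ⟶ fac i)
      (h : fac i ⟶ (obj i.castSucc)⟦(1 : ℤ)⟧), Triangle.mk f g h ∈ (distTriang D)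

variable (V : Type) [NormedAddCommGroup V] [NormedSpace ℝ V] [FiniteDimensional ℝ V]

/-- A stability condition with respect to a fixed additive map `v` from objects of `D`
to a finite-dimensional real vector space `V` (whose image generates the lattice `Λ`,
e.g. `Λ_H`):  a slicing and a central charge factoring as `Z = Z_V ∘ v`, satisfying the
support property: some quadratic form `Q` on `Λ ⊗ ℝ = span(im v)` is negative definite
on `ker Z` and nonnegative on classes of semistable objects. -/
structure StabilityConditionWrt (v : D → V) where
  slicing : Slicing D
  ZV : V →ₗ[ℝ] ℂ
  Z_phase : ∀ (φ : ℝ) (E : D), E ∈ slicing.P φ → ¬ IsZero E →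
    ∃ m : ℝ, 0 < m ∧ ZV (v E) = (m : ℂ) * Complex.exp ((Real.pi * φ : ℝ) * Complex.I)
  support_property :
    ∃ Q : QuadraticForm ℝ V,
      (∀ x : V, x ∈ Submodule.span ℝ (Set.range v) → ZV x = 0 → x ≠ 0 → Q x < 0) ∧
      (∀ (φ : ℝ) (E : D), E ∈ slicing.P φ → ¬ IsZero E → 0 ≤ Q (v E))

variable {D V}

/-- The generalized (extended) distance between two stability conditions:
`sup_E max(|φ⁺_σ(E) - φ⁺_τ(E)|, |φ⁻_σ(E) - φ⁻_τ(E)|) ⊔ ‖Z_σ - Z_τ‖`. -/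
def stabDist {v : D → V} (σ τ : StabilityConditionWrt D V v) : ℝ≥0∞ :=
  (⨆ E : D, ENNReal.ofReal
      (max |σ.slicing.phasePlus E - τ.slicing.phasePlus E|
        |σ.slicing.phaseMinus E - τ.slicing.phaseMinus E|)) ⊔
    ENNReal.ofReal ‖LinearMap.toContinuousLinearMap (σ.ZV - τ.ZV)‖

/-- The metric topology on the space of stability conditions `Stab_Λ`, generated by the
open balls of the generalized metric `stabDist`. -/
def stabTopology {v : D → V} : TopologicalSpace (StabilityConditionWrt D V v) :=
  TopologicalSpace.generateFrom
    {U | ∃ (σ : StabilityConditionWrt D V v) (ε : ℝ≥0∞), 0 < ε ∧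
      U = {τ | stabDist σ τ < ε}}

/-- An object `G` of a heart `A ⊆ D` which is semistable with respect to the central
charge `Z` (on the heart): no subobject of `G` in `A` (encoded by a distinguished
triangle `U → G → Q → U[1]` with `U, Q ∈ A`) has strictly larger phase, phases being
measured by the argument of `Z`. -/
def heartSemistable (A : Set D) (Z : D → ℂ) (G : D) : Prop :=
  G ∈ A ∧ ¬ IsZero G ∧
    ∀ (U Q : D) (f : U ⟶ G) (g : G ⟶ Q) (h : Q ⟶ U⟦(1 : ℤ)⟧),
      Triangle.mk f g h ∈ (distTriang D) → U ∈ A → Q ∈ A → ¬ IsZero U → ¬ IsZero Q →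
        (Z U).arg ≤ (Z G).arg

/-- The slicing obtained from a heart `A` together with a central charge `Z` mapping
nonzero objects of `A` to the semi-closed upper half plane: `P(φ)` for `φ ∈ (0,1]`
consists of the `Z`-semistable objects of `A` of phase `φ = arg(Z)/π`, and it is
extended to all `φ ∈ ℝ` by `P(φ + n) = P(φ)[n]`. -/
def heartSlicingP (A : Set D) (Z : D → ℂ) : ℝ → Set D := fun φ =>
  {F : D | IsZero F ∨ ∃ (n : ℤ) (G : D), heartSemistable A Z G ∧
    (Z G).arg = Real.pi * (φ - n) ∧ 0 < φ - (n : ℝ) ∧ φ - (n : ℝ) ≤ 1 ∧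
      Nonempty (F ≅ G⟦n⟧)}

/-- The universal cover `G̃L⁺₂(ℝ)` of `GL⁺₂(ℝ)`: pairs `(L, f)` of an
orientation-preserving `ℝ`-linear automorphism `L` of `ℂ = ℝ²` together with a lift
`f : ℝ → ℝ` of its action on the rays of `ℂ`, i.e. `f` is an increasing function with
`f(φ + 1) = f(φ) + 1` and `L(exp(iπ f(φ))) ∈ ℝ_{>0} · exp(iπφ)`. -/
structure GLtildePlus where
  L : ℂ ≃ₗ[ℝ] ℂ
  det_pos : 0 < LinearMap.det (L : ℂ →ₗ[ℝ] ℂ)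
  f : ℝ → ℝ
  f_mono : StrictMono f
  f_shift : ∀ φ : ℝ, f (φ + 1) = f φ + 1
  compat : ∀ φ : ℝ, ∃ r : ℝ, 0 < r ∧
    L (Complex.exp ((Real.pi * f φ : ℝ) * Complex.I)) =
      (r : ℂ) * Complex.exp ((Real.pi * φ : ℝ) * Complex.I)

/-- The topology on `G̃L⁺₂(ℝ)` (induced by pointwise convergence of the data). -/
def GLtildePlus.topology : TopologicalSpace GLtildePlus :=
  TopologicalSpace.induced (fun g => (g.f, (g.L : ℂ → ℂ))) inferInstance

/-- `σ = σ₀ · g` for some `g ∈ G̃L⁺₂(ℝ)`, where `σ₀` is the stability condition with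
heart `A` and central charge `Z₀`:  there is `g = (L, f)` in `G̃L⁺₂(ℝ)` with
`P_σ(φ) = P_{σ₀}(f(φ))` for all `φ` and `Z_σ = L ∘ Z₀`. -/
def IsGLtildeTranslateOf {v : D → V} (σ : StabilityConditionWrt D V v)
    (A : Set D) (Z₀ : D → ℂ) : Prop :=
  ∃ g : GLtildePlus,
    (∀ φ : ℝ, σ.slicing.P φ = heartSlicingP A Z₀ (g.f φ)) ∧
    (∀ E : D, σ.ZV (v E) = g.L (Z₀ E))


/-! ### Infrastructure for the proof of Statement 18 -/

section Statement18Proof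

open ZeroObject

namespace HNFiltration

variable {P : ℝ → Set D} {E : D}

/-- The first morphism of the `i`-th chosen triangle of a HN filtration. -/
noncomputable def mor₁ (F : HNFiltration D P E) (i : Fin F.n) :
    F.obj i.castSucc ⟶ F.obj i.succ := (F.factor_triangle i).choose

/-- The second morphism of the `i`-th chosen triangle of a HN filtration. -/
noncomputable def mor₂ (F : HNFiltration D P E) (i : Fin F.n) :
    F.obj i.succ ⟶ F.factor i := (F.factor_triangle i).choose_spec.choose

/-- The connecting morphism of the `i`-th chosen triangle of a HN filtration. -/
noncomputable def mor₃ (F : HNFiltration D P E) (i : Fin F.n) :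
    F.factor i ⟶ (F.obj i.castSucc)⟦(1 : ℤ)⟧ :=
  (F.factor_triangle i).choose_spec.choose_spec.choose

lemma tri_mem (F : HNFiltration D P E) (i : Fin F.n) :
    Triangle.mk (F.mor₁ i) (F.mor₂ i) (F.mor₃ i) ∈ (distTriang D) :=
  (F.factor_triangle i).choose_spec.choose_spec.choose_spec

lemma pos (F : HNFiltration D P E) (hE : ¬ IsZero E) : 0 < F.n := by
  rcases Nat.eq_zero_or_pos F.n with h0 | h; swap
  · exact h
  · exfalso
    apply hE
    have hz := F.obj_zero
    have e : (0 : Fin (F.n + 1)) = Fin.last F.n := by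
      apply Fin.ext; simp [h0]
    rw [e, F.obj_last] at hz
    exact hz

/-- The composite morphism from a filtration stage to the filtered object. -/
noncomputable def toLast (F : HNFiltration D P E) : ∀ j : Fin (F.n + 1), F.obj j ⟶ E :=
  Fin.reverseInduction (eqToHom F.obj_last) (fun i g => F.mor₁ i ≫ g)

@[simp] lemma toLast_last (F : HNFiltration D P E) :
    F.toLast (Fin.last F.n) = eqToHom F.obj_last :=
  Fin.reverseInduction_last ..

lemma toLast_castSucc (F : HNFiltration D P E) (i : Fin F.n) :
    F.toLast i.castSucc = F.mor₁ i ≫ F.toLast i.succ :=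
  Fin.reverseInduction_castSucc ..

/-- Truncation of a HN filtration: the filtration of the `k`-th filtration object by
the first `k` factors. -/
noncomputable def truncate (F : HNFiltration D P E) (k : ℕ) (hk : k ≤ F.n) :
    HNFiltration D P (F.obj ⟨k, Nat.lt_succ_of_le hk⟩) where
  n := k
  phase i := F.phase ⟨i.1, lt_of_lt_of_le i.2 hk⟩
  phase_strictAnti := by
    intro i j hij
    exact F.phase_strictAnti (show (⟨i.1, _⟩ : Fin F.n) < ⟨j.1, _⟩ from hij)
  obj j := F.obj ⟨j.1, by omega⟩
  obj_zero := by
    convert F.obj_zero using 2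
    exact Fin.ext (by simp)
  obj_last := rfl
  factor i := F.factor ⟨i.1, lt_of_lt_of_le i.2 hk⟩
  factor_mem i := F.factor_mem _
  factor_nonzero i := F.factor_nonzero _
  factor_triangle i := F.factor_triangle ⟨i.1, lt_of_lt_of_le i.2 hk⟩

end HNFiltration

namespace Slicing

variable (S : Slicing D)

lemma mem_shift {X : D} {φ : ℝ} (hX : X ∈ S.P φ) : X⟦(1 : ℤ)⟧ ∈ S.P (φ + 1) :=
  (S.shift_mem φ X).mp hX

lemma mem_shift_neg {X : D} {φ : ℝ} (hX : X ∈ S.P φ) : X⟦(-1 : ℤ)⟧ ∈ S.P (φ - 1) := by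
  have h' := (S.shift_mem (φ - 1) (X⟦(-1 : ℤ)⟧))
  rw [sub_add_cancel] at h'
  apply h'.mpr
  exact S.iso_closed φ X _ hX ⟨((shiftEquiv D (1 : ℤ)).counitIso.app X).symm⟩

/-- Shift of a HN filtration by `1`. -/
noncomputable def shiftFilt {E : D} (F : HNFiltration D S.P E) :
    HNFiltration D S.P (E⟦(1 : ℤ)⟧) where
  n := F.n
  phase i := F.phase i + 1
  phase_strictAnti := by
    intro i j hij
    dsimp only
    have := F.phase_strictAnti hij
    linarith
  obj j := (F.obj j)⟦(1 : ℤ)⟧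
  obj_zero := (shiftFunctor D (1 : ℤ)).map_isZero F.obj_zero
  obj_last := by simp only [F.obj_last]
  factor i := (F.factor i)⟦(1 : ℤ)⟧
  factor_mem i := S.mem_shift (F.factor_mem i)
  factor_nonzero i hz := F.factor_nonzero i
    (((shiftFunctor D (-1 : ℤ)).map_isZero hz).of_iso
      ((shiftEquiv D (1 : ℤ)).unitIso.app (F.factor i)))
  factor_triangle i :=
    ⟨_, _, _, rot_of_distTriang _ (rot_of_distTriang _ (rot_of_distTriang _ (F.tri_mem i)))⟩

/-- Shift of a HN filtration by `-1`. -/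
noncomputable def shiftNegFilt {E : D} (F : HNFiltration D S.P E) :
    HNFiltration D S.P (E⟦(-1 : ℤ)⟧) where
  n := F.n
  phase i := F.phase i - 1
  phase_strictAnti := by
    intro i j hij
    dsimp only
    have := F.phase_strictAnti hij
    linarith
  obj j := (F.obj j)⟦(-1 : ℤ)⟧
  obj_zero := (shiftFunctor D (-1 : ℤ)).map_isZero F.obj_zero
  obj_last := by simp only [F.obj_last]
  factor i := (F.factor i)⟦(-1 : ℤ)⟧
  factor_mem i := S.mem_shift_neg (F.factor_mem i)
  factor_nonzero i hz := F.factor_nonzero i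
    (((shiftFunctor D (1 : ℤ)).map_isZero hz).of_iso
      ((shiftEquiv D (1 : ℤ)).counitIso.symm.app (F.factor i)))
  factor_triangle i :=
    ⟨_, _, _, inv_rot_of_distTriang _ (inv_rot_of_distTriang _
      (inv_rot_of_distTriang _ (F.tri_mem i)))⟩

/-- The trivial HN filtration of a nonzero semistable object. -/
noncomputable def ofMem {E : D} {φ : ℝ} (hE : E ∈ S.P φ) (hne : ¬ IsZero E) :
    HNFiltration D S.P E where
  n := 1
  phase _ := φ
  phase_strictAnti := by
    intro i j hij
    rw [Fin.lt_def] at hij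
    exfalso; omega
  obj j := if j.1 = 0 then 0 else E
  obj_zero := by simpa using isZero_zero D
  obj_last := by simp
  factor _ := E
  factor_mem _ := hE
  factor_nonzero _ := hne
  factor_triangle i := by
    obtain ⟨iv, hiv⟩ := i
    interval_cases iv
    exact ⟨_, _, _, contractible_distinguished₁ E⟩

/-- Morphisms from an object of phase larger than all phases of a filtration vanish. -/
lemma hom_zero_of_phases_lt {Y : D} (F : HNFiltration D S.P Y) {c : ℝ}
    (hc : ∀ i, F.phase i < c) {X : D} (hX : X ∈ S.P c) (f : X ⟶ Y) : f = 0 := by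
  suffices h : ∀ j : Fin (F.n + 1), ∀ g : X ⟶ F.obj j, g = 0 by
    have h2 := h (Fin.last F.n) (f ≫ eqToHom F.obj_last.symm)
    have : f = (f ≫ eqToHom F.obj_last.symm) ≫ eqToHom F.obj_last := by simp
    rw [this, h2, zero_comp]
  intro j
  induction j using Fin.induction with
  | zero => intro g; exact F.obj_zero.eq_of_tgt g 0
  | succ i ih =>
    intro g
    have hg : g ≫ F.mor₂ i = 0 := S.hom_vanish (hc i) hX (F.factor_mem i) _
    obtain ⟨w, hw⟩ := Triangle.coyoneda_exact₂ _ (F.tri_mem i) g hg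
    rw [hw, ih w]; exact zero_comp

/-- Morphisms to an object of phase smaller than all phases of a filtration vanish. -/
lemma hom_zero_of_lt_phases {X : D} (F : HNFiltration D S.P X) {c : ℝ}
    (hc : ∀ i, c < F.phase i) {Y : D} (hY : Y ∈ S.P c) (f : X ⟶ Y) : f = 0 := by
  suffices h : ∀ j : Fin (F.n + 1), ∀ g : F.obj j ⟶ Y, g = 0 by
    have h2 := h (Fin.last F.n) (eqToHom F.obj_last ≫ f)
    have : f = eqToHom F.obj_last.symm ≫ (eqToHom F.obj_last ≫ f) := by simp
    rw [this, h2, comp_zero]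
  intro j
  induction j using Fin.induction with
  | zero => intro g; exact F.obj_zero.eq_of_src g 0
  | succ i ih =>
    intro g
    have h1 : F.mor₁ i ≫ g = 0 := ih _
    obtain ⟨w, hw⟩ := Triangle.yoneda_exact₂ _ (F.tri_mem i) g h1
    rw [hw, S.hom_vanish (hc i) (F.factor_mem i) hY w]; exact comp_zero

/-- There is a nonzero morphism from the top HN factor to the filtered object. -/
lemma exists_hom_from_top {E : D} (F : HNFiltration D S.P E) (hn : 0 < F.n) :
    ∃ u : F.factor ⟨0, hn⟩ ⟶ E, u ≠ 0 := by
  set i0 : Fin F.n := ⟨0, hn⟩ with hi0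
  have hzc : IsZero (F.obj i0.castSucc) := by
    have e : i0.castSucc = 0 := by apply Fin.ext; simp [hi0]
    rw [e]; exact F.obj_zero
  have hiso : IsIso (F.mor₂ i0) := (Triangle.isZero₁_iff_isIso₂ _ (F.tri_mem i0)).mp hzc
  refine ⟨inv (F.mor₂ i0) ≫ F.toLast i0.succ, ?_⟩
  have key : ∀ j : Fin (F.n + 1), ∀ w : F.factor i0 ⟶ F.obj j,
      w ≫ F.toLast j = 0 → w = 0 := by
    intro j
    induction j using Fin.reverseInduction with
    | last =>
      intro w hw
      rw [F.toLast_last] at hw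
      simpa using hw
    | cast i ih =>
      intro w hw
      rw [F.toLast_castSucc, ← Category.assoc] at hw
      have h1 : w ≫ F.mor₁ i = 0 := ih _ hw
      obtain ⟨g, hg⟩ := Triangle.coyoneda_exact₂ _ (inv_rot_of_distTriang _ (F.tri_mem i)) w h1
      have hg0 : g = 0 := by
        apply S.hom_vanish (show F.phase i - 1 < F.phase i0 by
          have : F.phase i ≤ F.phase i0 := F.phase_strictAnti.antitone (by
            rw [Fin.le_def]; simp [hi0])
          linarith) (F.factor_mem i0) (S.mem_shift_neg (F.factor_mem i))
      rw [hg, hg0]; exact zero_comp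
  intro hu
  have h0 : inv (F.mor₂ i0) = 0 := key i0.succ _ hu
  have : 𝟙 (F.factor i0) = 0 := by
    rw [← IsIso.inv_hom_id (F.mor₂ i0), h0, zero_comp]
  exact F.factor_nonzero i0 (IsZero.of_iso (isZero_zero D)
    ⟨0, 0, by simp [this], by simp⟩)

/-- There is a nonzero morphism from the filtered object to the bottom HN factor. -/
lemma exists_hom_to_bot {E : D} (F : HNFiltration D S.P E) (hn : 0 < F.n) :
    ∃ v : E ⟶ F.factor ⟨F.n - 1, by omega⟩, v ≠ 0 := by
  set i : Fin F.n := ⟨F.n - 1, by omega⟩ with hi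
  have hsucc : i.succ = Fin.last F.n := by apply Fin.ext; simp [hi]; omega
  have hobj : F.obj i.succ = E := by rw [hsucc, F.obj_last]
  refine ⟨eqToHom hobj.symm ≫ F.mor₂ i, ?_⟩
  intro hv
  have h2 : F.mor₂ i = 0 := by
    have := congrArg (fun q => eqToHom hobj ≫ q) hv
    simpa using this
  obtain ⟨r, hr⟩ := Triangle.yoneda_exact₂ _ (rot_of_distTriang _ (F.tri_mem i))
    (𝟙 (F.factor i)) (by
      have : (Triangle.mk (F.mor₁ i) (F.mor₂ i) (F.mor₃ i)).rotate.mor₁ = F.mor₂ i := rfl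
      rw [this, h2]; exact zero_comp)
  have hr0 : r = 0 := by
    apply S.hom_zero_of_lt_phases (S.shiftFilt (F.truncate (F.n - 1) (by omega)))
      ?_ (F.factor_mem i) r
    intro l
    have hl : l.1 < F.n - 1 := l.2
    have hle : F.phase i ≤ F.phase ⟨l.1, by omega⟩ := by
      apply F.phase_strictAnti.antitone
      rw [Fin.le_def]; simp [hi]; omega
    show F.phase i < F.phase ⟨l.1, by omega⟩ + 1
    linarith
  rw [hr0, comp_zero] at hr
  exact F.factor_nonzero i (IsZero.of_iso (isZero_zero D) ⟨0, 0, by exact zero_comp.trans hr.symm, by simp⟩)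

variable {S}

/-- The top phase of a HN filtration does not depend on the filtration. -/
lemma top_le_top {E : D} (hE : ¬ IsZero E) (F G : HNFiltration D S.P E) :
    F.phase ⟨0, F.pos hE⟩ ≤ G.phase ⟨0, G.pos hE⟩ := by
  by_contra hlt
  push_neg at hlt
  obtain ⟨u, hu⟩ := S.exists_hom_from_top F (F.pos hE)
  refine hu (S.hom_zero_of_phases_lt G (fun i => ?_) (F.factor_mem _) u)
  exact lt_of_le_of_lt (G.phase_strictAnti.antitone (by rw [Fin.le_def]; simp)) hlt

/-- The bottom phase of a HN filtration does not depend on the filtration. -/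
lemma bot_le_bot {E : D} (hE : ¬ IsZero E) (F G : HNFiltration D S.P E) :
    F.phase ⟨F.n - 1, by have := F.pos hE; omega⟩ ≤
      G.phase ⟨G.n - 1, by have := G.pos hE; omega⟩ := by
  by_contra hlt
  push_neg at hlt
  obtain ⟨v, hv⟩ := S.exists_hom_to_bot G (G.pos hE)
  refine hv (S.hom_zero_of_lt_phases F (fun i => ?_) (G.factor_mem _) v)
  refine lt_of_lt_of_le hlt (F.phase_strictAnti.antitone ?_)
  rw [Fin.le_def]; simp; omega

lemma hnPhases_mem_Icc {E : D} (hE : ¬ IsZero E) (F : HNFiltration D S.P E) {x : ℝ}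
    (hx : x ∈ S.hnPhases E) :
    x ∈ Set.Icc (F.phase ⟨F.n - 1, by have := F.pos hE; omega⟩) (F.phase ⟨0, F.pos hE⟩) := by
  obtain ⟨G, i, rfl⟩ := hx
  constructor
  · refine le_trans (bot_le_bot hE F G) (G.phase_strictAnti.antitone ?_)
    rw [Fin.le_def]; simp; omega
  · refine le_trans (G.phase_strictAnti.antitone (show ⟨0, G.pos hE⟩ ≤ i by
      rw [Fin.le_def]; simp)) (top_le_top hE G F)

lemma phasePlus_eq {E : D} (hE : ¬ IsZero E) (F : HNFiltration D S.P E) :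
    S.phasePlus E = F.phase ⟨0, F.pos hE⟩ := by
  have hmem : F.phase ⟨0, F.pos hE⟩ ∈ S.hnPhases E := ⟨F, ⟨0, F.pos hE⟩, rfl⟩
  have hub : F.phase ⟨0, F.pos hE⟩ ∈ upperBounds (S.hnPhases E) :=
    fun x hx => (hnPhases_mem_Icc hE F hx).2
  apply le_antisymm
  · exact csSup_le ⟨_, hmem⟩ hub
  · exact le_csSup ⟨_, hub⟩ hmem

lemma phaseMinus_eq {E : D} (hE : ¬ IsZero E) (F : HNFiltration D S.P E) :
    S.phaseMinus E = F.phase ⟨F.n - 1, by have := F.pos hE; omega⟩ := by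
  have hmem : F.phase ⟨F.n - 1, by have := F.pos hE; omega⟩ ∈ S.hnPhases E :=
    ⟨F, ⟨F.n - 1, by have := F.pos hE; omega⟩, rfl⟩
  have hlb : F.phase ⟨F.n - 1, by have := F.pos hE; omega⟩ ∈ lowerBounds (S.hnPhases E) :=
    fun x hx => (hnPhases_mem_Icc hE F hx).1
  apply le_antisymm
  · exact csInf_le ⟨_, hlb⟩ hmem
  · exact le_csInf ⟨_, hmem⟩ hlb

lemma phasePlus_of_mem {E : D} {φ : ℝ} (hE : E ∈ S.P φ) (hne : ¬ IsZero E) :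
    S.phasePlus E = φ :=
  phasePlus_eq hne (S.ofMem hE hne)

lemma phaseMinus_of_mem {E : D} {φ : ℝ} (hE : E ∈ S.P φ) (hne : ¬ IsZero E) :
    S.phaseMinus E = φ :=
  phaseMinus_eq hne (S.ofMem hE hne)

lemma le_phasePlus {E : D} (hE : ¬ IsZero E) (F : HNFiltration D S.P E) (i : Fin F.n) :
    F.phase i ≤ S.phasePlus E := by
  rw [phasePlus_eq hE F]
  exact F.phase_strictAnti.antitone (by rw [Fin.le_def]; simp)

lemma phaseMinus_le {E : D} (hE : ¬ IsZero E) (F : HNFiltration D S.P E) (i : Fin F.n) :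
    S.phaseMinus E ≤ F.phase i := by
  rw [phaseMinus_eq hE F]
  apply F.phase_strictAnti.antitone
  rw [Fin.le_def]; simp; omega

/-- A filtration with a single phase value exhibits a semistable object. -/
lemma mem_of_single {E : D} (F : HNFiltration D S.P E) (h1 : F.n = 1) :
    E ∈ S.P (F.phase ⟨0, by omega⟩) := by
  set i0 : Fin F.n := ⟨0, by omega⟩ with hi0
  have hzc : IsZero (F.obj i0.castSucc) := by
    have e : i0.castSucc = 0 := by apply Fin.ext; simp [hi0]
    rw [e]; exact F.obj_zero
  have hiso : IsIso (F.mor₂ i0) := (Triangle.isZero₁_iff_isIso₂ _ (F.tri_mem i0)).mp hzc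
  have e2 : i0.succ = Fin.last F.n := by apply Fin.ext; simp [hi0, h1]
  have hobj : F.obj i0.succ = E := by rw [e2, F.obj_last]
  exact S.iso_closed _ _ _ (F.factor_mem i0) ⟨(asIso (F.mor₂ i0)).symm ≪≫ eqToIso hobj⟩

end Slicing

namespace Slicing

/-- `Ub S t X`: every morphism to `X` from a semistable object of phase `> t` vanishes. -/
def Ub (S : Slicing D) (t : ℝ) (X : D) : Prop :=
  ∀ ⦃c : ℝ⦄, t < c → ∀ ⦃C : D⦄, C ∈ S.P c → ∀ f : C ⟶ X, f = 0

variable {S : Slicing D}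

lemma ub_of_filt {X : D} (F : HNFiltration D S.P X) {t : ℝ} (ht : ∀ i, F.phase i ≤ t) :
    S.Ub t X :=
  fun _ hc _ hC f => S.hom_zero_of_phases_lt F (fun i => lt_of_le_of_lt (ht i) hc) hC f

lemma phasePlus_le_of_ub {X : D} (hX : ¬ IsZero X) {t : ℝ} (h : S.Ub t X) :
    S.phasePlus X ≤ t := by
  obtain ⟨F⟩ := S.hn_exists X
  rw [phasePlus_eq hX F]
  by_contra hlt
  push_neg at hlt
  obtain ⟨u, hu⟩ := S.exists_hom_from_top F (F.pos hX)
  exact hu (h hlt (F.factor_mem _) u)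

end Slicing

namespace HNFiltration

/-- Additivity of the central charge along a HN filtration. -/
lemma Z_sum {P : ℝ → Set D} {E : D} (F : HNFiltration D P E) (Z : D → ℂ)
    (hZ0 : ∀ X : D, IsZero X → Z X = 0)
    (hZa : ∀ T : Triangle D, T ∈ (distTriang D) → Z T.obj₂ = Z T.obj₁ + Z T.obj₃) :
    Z E = ∑ i : Fin F.n, Z (F.factor i) := by
  have key : ∀ j : Fin (F.n + 1),
      Z (F.obj j) = ∑ i : Fin F.n, if i.1 < j.1 then Z (F.factor i) else 0 := by
    intro j
    induction j using Fin.induction with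
    | zero =>
      rw [hZ0 _ F.obj_zero]
      symm
      apply Finset.sum_eq_zero
      intro i _
      rw [if_neg (by simp)]
    | succ i ih =>
      have h3 : Z (F.obj i.succ) = Z (F.obj i.castSucc) + Z (F.factor i) :=
        hZa _ (F.tri_mem i)
      have hsum : ∀ i' : Fin F.n,
          (if i'.1 < (i.succ).1 then Z (F.factor i') else 0) =
            (if i'.1 < (i.castSucc).1 then Z (F.factor i') else 0)
              + (if i' = i then Z (F.factor i') else 0) := by
        intro i'
        rcases lt_trichotomy i'.1 i.1 with hlt | heq | hgt
        · rw [if_pos (by simp; omega), if_pos (by simpa using hlt),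
            if_neg (fun he => by rw [he] at hlt; omega), add_zero]
        · have he : i' = i := Fin.ext heq
          rw [if_pos (by simp; omega), if_neg (by simp [he]), if_pos he, zero_add]
        · rw [if_neg (by simp; omega), if_neg (by simp; omega),
            if_neg (fun he => by rw [he] at hgt; omega), add_zero]
      rw [h3, ih, Finset.sum_congr rfl (fun i' _ => hsum i'), Finset.sum_add_distrib,
        Finset.sum_ite_eq' Finset.univ i (fun i' => Z (F.factor i'))]
      simp
  have h := key (Fin.last F.n)
  rw [F.obj_last] at h
  rw [h]
  apply Finset.sum_congr rfl
  intro i _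
  rw [if_pos (by simpa using i.2)]

end HNFiltration

lemma im_exp_aux (m θ : ℝ) :
    ((m : ℂ) * Complex.exp ((θ : ℝ) * Complex.I)).im = m * Real.sin θ := by
  simp [Complex.exp_mul_I, Complex.sin_ofReal_re]

lemma exp_combine (m a b : ℝ) :
    (m : ℂ) * Complex.exp ((a : ℝ) * Complex.I) * Complex.exp ((b : ℝ) * Complex.I)
      = (m : ℂ) * Complex.exp (((a + b : ℝ) : ℂ) * Complex.I) := by
  rw [mul_assoc, ← Complex.exp_add]
  push_cast
  ring_nf

lemma im_sum_exp {n : ℕ} (m θ : Fin n → ℝ) (b : ℝ) :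
    ((∑ i, (m i : ℂ) * Complex.exp ((θ i : ℝ) * Complex.I))
        * Complex.exp ((b : ℝ) * Complex.I)).im
      = ∑ i, m i * Real.sin (θ i + b) := by
  rw [Finset.sum_mul,
    Finset.sum_congr rfl (fun i (_ : i ∈ Finset.univ) => exp_combine (m i) (θ i) b),
    Complex.im_sum]
  exact Finset.sum_congr rfl (fun i _ => im_exp_aux (m i) (θ i + b))

section Main

variable {σ τ : StabilityCondition.{w} D}

/-- Key lemma: if `E` is `σ`-semistable of phase `φ`, then all `τ`-HN phases of `E`
are at most `φ`. -/
lemma top_lemma (hZ : ∀ E : D, σ.Z E = τ.Z E)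
    (hd : ∀ E : D, ¬ IsZero E →
      |σ.slicing.phasePlus E - τ.slicing.phasePlus E| ≤ 1 ∧
      |σ.slicing.phaseMinus E - τ.slicing.phaseMinus E| ≤ 1)
    {φ : ℝ} {E : D} (hE : E ∈ σ.slicing.P φ) (hne : ¬ IsZero E)
    (h : HNFiltration D τ.slicing.P E) : ∀ i : Fin h.n, h.phase i ≤ φ := by
  by_contra hcon
  push_neg at hcon
  -- the maximal index with phase > φ
  set K := Finset.univ.filter (fun i : Fin h.n => φ < h.phase i) with hK
  have hKne : K.Nonempty := by
    obtain ⟨i, hi⟩ := hcon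
    exact ⟨i, by simp [hK, hi]⟩
  set k : Fin h.n := K.max' hKne with hkdef
  have hkφ : φ < h.phase k := by
    have := K.max'_mem hKne
    simp [hK] at this
    exact this
  have hkmax : ∀ i : Fin h.n, φ < h.phase i → i ≤ k := by
    intro i hi
    exact K.le_max' i (by simp [hK, hi])
  have hEplusσ : σ.slicing.phasePlus E = φ := Slicing.phasePlus_of_mem hE hne
  have hEplusτ : τ.slicing.phasePlus E ≤ φ + 1 := by
    have h1 := (hd E hne).1
    rw [hEplusσ] at h1
    have := abs_le.mp h1
    linarith [this.1]
  have hple : ∀ i : Fin h.n, h.phase i ≤ φ + 1 := fun i =>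
    le_trans (Slicing.le_phasePlus hne h i) hEplusτ
  -- upper Hom-vanishing bound for the tail filtration objects
  have stepA : ∀ j : Fin (h.n + 1), (k : ℕ) < j.1 → σ.slicing.Ub φ (h.obj j) := by
    intro j
    induction j using Fin.reverseInduction with
    | last =>
      intro _
      rw [h.obj_last]
      intro c hc C hC f
      exact σ.slicing.hom_vanish hc hC hE f
    | cast i ih =>
      intro hij
      have hij' : (k : ℕ) < i.1 := by simpa using hij
      have h1 : (k : ℕ) < (i.succ).1 := by simp; omega
      have hub2 := ih h1
      have hphase : h.phase i ≤ φ := by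
        by_contra hgt
        push_neg at hgt
        have := hkmax i hgt
        rw [Fin.le_def] at this
        omega
      have hBnz := h.factor_nonzero i
      have hBplusτ : τ.slicing.phasePlus (h.factor i) = h.phase i :=
        Slicing.phasePlus_of_mem (h.factor_mem i) hBnz
      have hBplusσ : σ.slicing.phasePlus (h.factor i) ≤ h.phase i + 1 := by
        have h1' := (hd _ hBnz).1
        rw [hBplusτ] at h1'
        have := abs_le.mp h1'
        linarith [this.2]
      have hubB : σ.slicing.Ub φ ((h.factor i)⟦(-1 : ℤ)⟧) := by
        obtain ⟨F'⟩ := σ.slicing.hn_exists (h.factor i)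
        apply Slicing.ub_of_filt (σ.slicing.shiftNegFilt F')
        intro l
        show F'.phase l - 1 ≤ φ
        have := Slicing.le_phasePlus hBnz F' l
        linarith
      intro c hc C hC f
      have h2 : f ≫ h.mor₁ i = 0 := hub2 hc hC _
      obtain ⟨g, hg⟩ := Triangle.coyoneda_exact₂ _ (inv_rot_of_distTriang _ (h.tri_mem i)) f h2
      rw [hg, hubB hc hC g]; exact zero_comp
  -- the truncated object V
  set V := h.obj k.succ with hVdef
  have hVub : σ.slicing.Ub φ V := stepA k.succ (by simp)
  set hVfil : HNFiltration D τ.slicing.P V := h.truncate (k.1 + 1) k.2 with hVfildef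
  have hVnz : ¬ IsZero V := by
    intro hz
    obtain ⟨u, hu⟩ := τ.slicing.exists_hom_from_top hVfil (Nat.succ_pos k.1)
    exact hu (hz.eq_of_tgt u 0)
  have hVlo : ∀ i : Fin hVfil.n, φ < hVfil.phase i := by
    intro i
    have hi2 : i.1 < k.1 + 1 := i.2
    have e : hVfil.phase i = h.phase ⟨i.1, lt_of_lt_of_le i.2 k.2⟩ := rfl
    rw [e]
    refine lt_of_lt_of_le hkφ (h.phase_strictAnti.antitone ?_)
    rw [Fin.le_def]
    simpa using by omega
  have hVhi : ∀ i : Fin hVfil.n, hVfil.phase i ≤ φ + 1 := by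
    intro i
    have e : hVfil.phase i = h.phase ⟨i.1, lt_of_lt_of_le i.2 k.2⟩ := rfl
    rw [e]
    exact hple _
  -- the σ-HN filtration of V
  obtain ⟨G⟩ := σ.slicing.hn_exists V
  have hGub : ∀ l : Fin G.n, G.phase l ≤ φ := fun l =>
    le_trans (Slicing.le_phasePlus hVnz G l) (Slicing.phasePlus_le_of_ub hVnz hVub)
  have hVminτ : τ.slicing.phaseMinus V = h.phase k :=
    Slicing.phaseMinus_eq hVnz hVfil
  have hVminσ : h.phase k - 1 ≤ σ.slicing.phaseMinus V := by
    have h2' := (hd V hVnz).2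
    rw [hVminτ] at h2'
    have := abs_le.mp h2'
    linarith [this.1]
  have hGlb : ∀ l : Fin G.n, h.phase k - 1 ≤ G.phase l := fun l =>
    le_trans hVminσ (Slicing.phaseMinus_le hVnz G l)
  -- masses
  choose mτ hmτ hZτ using fun i : Fin hVfil.n =>
    τ.Z_phase (hVfil.phase i) (hVfil.factor i) (hVfil.factor_mem i) (hVfil.factor_nonzero i)
  choose mσ hmσ hZσ using fun l : Fin G.n =>
    σ.Z_phase (G.phase l) (G.factor l) (G.factor_mem l) (G.factor_nonzero l)
  have hsumτ : τ.Z V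
      = ∑ i, (mτ i : ℂ) * Complex.exp ((Real.pi * hVfil.phase i : ℝ) * Complex.I) := by
    rw [hVfil.Z_sum τ.Z τ.Z_zero τ.Z_additive]
    exact Finset.sum_congr rfl (fun i _ => hZτ i)
  have hsumσ : σ.Z V
      = ∑ l, (mσ l : ℂ) * Complex.exp ((Real.pi * G.phase l : ℝ) * Complex.I) := by
    rw [G.Z_sum σ.Z σ.Z_zero σ.Z_additive]
    exact Finset.sum_congr rfl (fun l _ => hZσ l)
  -- imaginary part balance
  have e1 := im_sum_exp (fun i => mτ i) (fun i => Real.pi * hVfil.phase i) (-(Real.pi * φ))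
  have e2 := im_sum_exp (fun l => mσ l) (fun l => Real.pi * G.phase l) (-(Real.pi * φ))
  rw [← hsumτ] at e1
  rw [← hsumσ] at e2
  have hbal : ∑ i, mτ i * Real.sin (Real.pi * hVfil.phase i + -(Real.pi * φ))
      = ∑ l, mσ l * Real.sin (Real.pi * G.phase l + -(Real.pi * φ)) := by
    rw [← e1, ← e2, hZ V]
  -- sign analysis
  have hτterm : ∀ i, 0 ≤ mτ i * Real.sin (Real.pi * hVfil.phase i + -(Real.pi * φ)) := by
    intro i
    apply mul_nonneg (le_of_lt (hmτ i))
    apply Real.sin_nonneg_of_nonneg_of_le_pi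
    · nlinarith [Real.pi_pos, hVlo i]
    · nlinarith [Real.pi_pos, hVhi i]
  have hσterm : ∀ l, mσ l * Real.sin (Real.pi * G.phase l + -(Real.pi * φ)) ≤ 0 := by
    intro l
    apply mul_nonpos_of_nonneg_of_nonpos (le_of_lt (hmσ l))
    apply Real.sin_nonpos_of_nonpos_of_neg_pi_le
    · nlinarith [Real.pi_pos, hGub l]
    · nlinarith [Real.pi_pos, hGlb l, hkφ]
  have hsum0τ : ∑ i, mτ i * Real.sin (Real.pi * hVfil.phase i + -(Real.pi * φ)) = 0 := by
    apply le_antisymm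
    · rw [hbal]
      exact Finset.sum_nonpos (fun l _ => hσterm l)
    · exact Finset.sum_nonneg (fun i _ => hτterm i)
  have hsum0σ : ∑ l, mσ l * Real.sin (Real.pi * G.phase l + -(Real.pi * φ)) = 0 := by
    rw [← hbal]
    exact hsum0τ
  have hτzero := (Finset.sum_eq_zero_iff_of_nonneg (fun i _ => hτterm i)).mp hsum0τ
  have hσzero := (Finset.sum_eq_zero_iff_of_nonpos (fun l _ => hσterm l)).mp hsum0σ
  -- all τ-phases of V are φ + 1
  have hphase1 : ∀ i : Fin hVfil.n, hVfil.phase i = φ + 1 := by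
    intro i
    have h0 := hτzero i (Finset.mem_univ i)
    have hsin : Real.sin (Real.pi * hVfil.phase i + -(Real.pi * φ)) = 0 := by
      rcases mul_eq_zero.mp h0 with h' | h'
      · exact absurd h' (ne_of_gt (hmτ i))
      · exact h'
    by_contra hne'
    have hlt2 : hVfil.phase i < φ + 1 := lt_of_le_of_ne (hVhi i) hne'
    have hpos : 0 < Real.pi * hVfil.phase i + -(Real.pi * φ) := by
      nlinarith [Real.pi_pos, hVlo i]
    have hlt3 : Real.pi * hVfil.phase i + -(Real.pi * φ) < Real.pi := by
      nlinarith [Real.pi_pos]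
    exact absurd hsin (ne_of_gt (Real.sin_pos_of_pos_of_lt_pi hpos hlt3))
  -- all σ-phases of V are φ
  have hphaseG : ∀ l : Fin G.n, G.phase l = φ := by
    intro l
    have h0 := hσzero l (Finset.mem_univ l)
    have hsin : Real.sin (Real.pi * G.phase l + -(Real.pi * φ)) = 0 := by
      rcases mul_eq_zero.mp h0 with h' | h'
      · exact absurd h' (ne_of_gt (hmσ l))
      · exact h'
    by_contra hne'
    have hlt2 : G.phase l < φ := lt_of_le_of_ne (hGub l) hne'
    have hpos : 0 < -(Real.pi * G.phase l + -(Real.pi * φ)) := by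
      nlinarith [Real.pi_pos]
    have hlt3 : -(Real.pi * G.phase l + -(Real.pi * φ)) < Real.pi := by
      nlinarith [Real.pi_pos, hGlb l, hkφ]
    have := Real.sin_pos_of_pos_of_lt_pi hpos hlt3
    rw [Real.sin_neg, hsin] at this
    simpa using this
  -- V is τ-semistable of phase φ + 1
  have hk0 : k.1 = 0 := by
    by_contra hk0'
    have hb0 : 0 < hVfil.n := Nat.succ_pos k.1
    have hb1 : 1 < hVfil.n := by
      have : hVfil.n = k.1 + 1 := rfl
      omega
    have h01 : (⟨0, hb0⟩ : Fin hVfil.n) < ⟨1, hb1⟩ := Fin.mk_lt_mk.mpr Nat.zero_lt_one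
    have := hVfil.phase_strictAnti h01
    rw [hphase1 ⟨0, hb0⟩, hphase1 ⟨1, hb1⟩] at this
    exact lt_irrefl _ this
  have hG1 : G.n = 1 := by
    have hGpos : 0 < G.n := G.pos hVnz
    by_contra hG1'
    have hb1 : 1 < G.n := by omega
    have h01 : (⟨0, hGpos⟩ : Fin G.n) < ⟨1, hb1⟩ := Fin.mk_lt_mk.mpr Nat.zero_lt_one
    have := G.phase_strictAnti h01
    rw [hphaseG ⟨0, hGpos⟩, hphaseG ⟨1, hb1⟩] at this
    exact lt_irrefl _ this
  have hVσ : V ∈ σ.slicing.P φ := by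
    have := Slicing.mem_of_single G hG1
    rwa [hphaseG _] at this
  have hVτ : V ∈ τ.slicing.P (φ + 1) := by
    have hVn1 : hVfil.n = 1 := by
      have : hVfil.n = k.1 + 1 := rfl
      omega
    have := Slicing.mem_of_single hVfil hVn1
    rwa [hphase1 _] at this
  -- contradiction via the central charge
  obtain ⟨m1, hm1, hz1⟩ := σ.Z_phase φ V hVσ hVnz
  obtain ⟨m2, hm2, hz2⟩ := τ.Z_phase (φ + 1) V hVτ hVnz
  have hzz : (m1 : ℂ) * Complex.exp ((Real.pi * φ : ℝ) * Complex.I)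
      = (m2 : ℂ) * Complex.exp ((Real.pi * (φ + 1) : ℝ) * Complex.I) := by
    rw [← hz1, ← hz2, hZ V]
  have hexp : Complex.exp ((Real.pi * (φ + 1) : ℝ) * Complex.I)
      = - Complex.exp ((Real.pi * φ : ℝ) * Complex.I) := by
    have harg : ((Real.pi * (φ + 1) : ℝ) : ℂ) * Complex.I
        = ((Real.pi * φ : ℝ) : ℂ) * Complex.I + (Real.pi : ℝ) * Complex.I := by
      push_cast
      ring
    rw [harg, Complex.exp_add, Complex.exp_pi_mul_I]
    ring
  rw [hexp] at hzz
  have hmul : ((m1 : ℂ) + m2) * Complex.exp ((Real.pi * φ : ℝ) * Complex.I) = 0 := by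
    linear_combination hzz
  rcases mul_eq_zero.mp hmul with h' | h'
  · have : m1 + m2 = 0 := by exact_mod_cast h'
    linarith
  · exact absurd h' (Complex.exp_ne_zero _)

end Main

/-- Fu–Li–Zhao, Lemma 4.7.
Let `σ` and `τ` be two stability conditions on `D^b(X)` with the same central charge,
and suppose `d(σ, τ) ≤ 1` for the generalized metric
`d(σ, τ) = sup_{E ≠ 0} max(|φ⁻_σ(E) - φ⁻_τ(E)|, |φ⁺_σ(E) - φ⁺_τ(E)|)` (expressed
here by the pointwise bounds).  Then `σ = τ`, i.e. the slicings (and hence the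
stability conditions) coincide. -/
theorem eq_of_same_central_charge_and_dist_le_one
    (σ τ : StabilityCondition.{w} D)
    (hZ : ∀ E : D, σ.Z E = τ.Z E)
    (hd : ∀ E : D, ¬ IsZero E →
      |σ.slicing.phasePlus E - τ.slicing.phasePlus E| ≤ 1 ∧
      |σ.slicing.phaseMinus E - τ.slicing.phaseMinus E| ≤ 1) :
    ∀ φ : ℝ, σ.slicing.P φ = τ.slicing.P φ := by
  have main : ∀ (σ' τ' : StabilityCondition.{w} D),
      (∀ E : D, σ'.Z E = τ'.Z E) →
      (∀ E : D, ¬ IsZero E →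
        |σ'.slicing.phasePlus E - τ'.slicing.phasePlus E| ≤ 1 ∧
        |σ'.slicing.phaseMinus E - τ'.slicing.phaseMinus E| ≤ 1) →
      ∀ (φ : ℝ) (E : D), E ∈ σ'.slicing.P φ → E ∈ τ'.slicing.P φ := by
    intro σ' τ' hZ' hd' φ E hEmem
    by_cases hne : IsZero E
    · exact τ'.slicing.zero_mem φ E hne
    obtain ⟨h⟩ := τ'.slicing.hn_exists E
    have htop : ∀ i, h.phase i ≤ φ := top_lemma hZ' hd' hEmem hne h
    have hpos := h.pos hne
    have hbot : ∀ i : Fin h.n, φ ≤ h.phase i := by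
      have hbot' : φ ≤ h.phase ⟨h.n - 1, by omega⟩ := by
        by_contra hlt
        push_neg at hlt
        obtain ⟨v, hv⟩ := τ'.slicing.exists_hom_to_bot h hpos
        obtain ⟨Fb⟩ := σ'.slicing.hn_exists (h.factor ⟨h.n - 1, by omega⟩)
        have hZ'' : ∀ X : D, τ'.Z X = σ'.Z X := fun X => (hZ' X).symm
        have hd'' : ∀ X : D, ¬ IsZero X →
            |τ'.slicing.phasePlus X - σ'.slicing.phasePlus X| ≤ 1 ∧
            |τ'.slicing.phaseMinus X - σ'.slicing.phaseMinus X| ≤ 1 := by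
          intro X hX
          constructor
          · rw [abs_sub_comm]; exact (hd' X hX).1
          · rw [abs_sub_comm]; exact (hd' X hX).2
        have hFb : ∀ l : Fin Fb.n, Fb.phase l ≤ h.phase ⟨h.n - 1, by omega⟩ :=
          top_lemma hZ'' hd'' (h.factor_mem _) (h.factor_nonzero _) Fb
        exact hv (σ'.slicing.hom_zero_of_phases_lt Fb
          (fun l => lt_of_le_of_lt (hFb l) hlt) hEmem v)
      intro i
      refine le_trans hbot' (h.phase_strictAnti.antitone ?_)
      rw [Fin.le_def]
      have := i.2
      simp
      omega
    have hall : ∀ i : Fin h.n, h.phase i = φ := fun i => le_antisymm (htop i) (hbot i)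
    have h1 : h.n = 1 := by
      by_contra h1'
      have hb1 : 1 < h.n := by omega
      have h01 : (⟨0, hpos⟩ : Fin h.n) < ⟨1, hb1⟩ := Fin.mk_lt_mk.mpr Nat.zero_lt_one
      have hmono := h.phase_strictAnti h01
      rw [hall _, hall _] at hmono
      exact lt_irrefl _ hmono
    have hm := Slicing.mem_of_single h h1
    rwa [hall _] at hm
  intro φ
  ext E
  constructor
  · exact main σ τ hZ hd φ E
  · refine main τ σ (fun X => (hZ X).symm) (fun X hX => ⟨?_, ?_⟩) φ E
    · rw [abs_sub_comm]; exact (hd X hX).1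
    · rw [abs_sub_comm]; exact (hd X hX).2

end Statement18Proof

end BridgelandStability
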